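/- arXiv:1905.09613 — 2 statements merged into one kernel-verified Lean document; each statement's English description precedes it below -/
import Mathlib

section
/- The composition of the map 1 ⊗ τ ⊗ 1 : C ⊗ C ⊗ D ⊗ D → C ⊗ D ⊗ C ⊗ D (where τ(c ⊗ d) = (−1)^{ij} (ᵍd) ⊗ c for c ∈ (C_i)_g and d ∈ D_j) with the canonical surjection C ⊗ D ⊗ C ⊗ D → (C ⊗^G D) ⊗_{S⋊G} (C ⊗^G D) is kG-middle linear in the first two tensor arguments and S-middle linear in the last two tensor arguments; that is, it factors through (C ⊗_{kG} C) ⊗ (D ⊗_S D). -/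
open scoped TensorProduct
open MulOpposite

noncomputable section

universe u

variable (k : Type u) [Field k]

/-- The submodule of middle-linearity relations defining the tensor product over `R`
of a right `R`-module `M` and a left `R`-module `N`. -/
def midRel (R : Type u) [Ring R] (M N : Type u)
    [AddCommGroup M] [Module k M] [Module Rᵐᵒᵖ M]
    [AddCommGroup N] [Module k N] [Module R N] : Submodule k (M ⊗[k] N) :=
  Submodule.span k
    {z | ∃ (r : R) (m : M) (n : N), z = (op r • m) ⊗ₜ[k] n - m ⊗ₜ[k] (r • n)}

/-- The tensor product `M ⊗_R N` over `R`, as a quotient of `M ⊗[k] N`. -/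
abbrev OverR (R : Type u) [Ring R] (M N : Type u)
    [AddCommGroup M] [Module k M] [Module Rᵐᵒᵖ M]
    [AddCommGroup N] [Module k N] [Module R N] : Type u :=
  (M ⊗[k] N) ⧸ midRel k R M N

/-- The image of a pure tensor in `M ⊗_R N`. -/
abbrev omk (R : Type u) [Ring R] {M N : Type u}
    [AddCommGroup M] [Module k M] [Module Rᵐᵒᵖ M]
    [AddCommGroup N] [Module k N] [Module R N] (m : M) (n : N) :
    OverR k R M N :=
  Submodule.Quotient.mk (m ⊗ₜ[k] n)

variable (G : Type u) [Group G] [Finite G] [DecidableEq G]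
variable (S : Type u) [Ring S] [Algebra k S] [MulSemiringAction G S] [SMulCommClass G k S]

section SkewSetup

variable (C : Type u) [AddCommGroup C] [Module k C]
  [Module (MonoidAlgebra k G) C] [Module (MonoidAlgebra k G)ᵐᵒᵖ C]
  [IsScalarTower k (MonoidAlgebra k G) C] [IsScalarTower k (MonoidAlgebra k G)ᵐᵒᵖ C]
  [SMulCommClass (MonoidAlgebra k G) (MonoidAlgebra k G)ᵐᵒᵖ C]
  [SMulCommClass (MonoidAlgebra k G) k C] [SMulCommClass (MonoidAlgebra k G)ᵐᵒᵖ k C]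

/-- A `G`-graded projective resolution `C` of `kG` by `kG`-bimodules (internally graded:
`gr i` is the homological piece `C_i`, and `grG g` is the `G`-homogeneous component of
`G`-degree `g`, with `g₁ (C_i)_{g₂} g₃ = (C_i)_{g₁ g₂ g₃}`), together with the sign
operator `ε_C : c ↦ (-1)^{|c|} c`. -/
structure ResKG : Type u where
  gr : ℕ → Submodule k C
  grG : G → Submodule k C
  internal : DirectSum.IsInternal fun p : ℕ × G => gr p.1 ⊓ grG p.2
  internalN : DirectSum.IsInternal gr
  gr_smul : ∀ (n : ℕ) (a : MonoidAlgebra k G) (x : C), x ∈ gr n → a • x ∈ gr n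
  gr_smul_op : ∀ (n : ℕ) (a : (MonoidAlgebra k G)ᵐᵒᵖ) (x : C), x ∈ gr n → a • x ∈ gr n
  grG_act : ∀ (g₁ g₂ g₃ : G) (x : C), x ∈ grG g₂ →
    (MonoidAlgebra.single g₁ (1 : k)) • (op (MonoidAlgebra.single g₃ (1 : k)) • x)
      ∈ grG (g₁ * g₂ * g₃)
  proj : letI : Module ((MonoidAlgebra k G) ⊗[k] (MonoidAlgebra k G)ᵐᵒᵖ) C :=
      TensorProduct.Algebra.module
    Module.Projective ((MonoidAlgebra k G) ⊗[k] (MonoidAlgebra k G)ᵐᵒᵖ) C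
  d : C →ₗ[k] C
  d_gr : ∀ (n : ℕ) (x : C), x ∈ gr (n + 1) → d x ∈ gr n
  d_grG : ∀ (g : G) (x : C), x ∈ grG g → d x ∈ grG g
  d_zero : ∀ x ∈ gr 0, d x = 0
  d_sq : d ∘ₗ d = 0
  d_smul : ∀ (a : MonoidAlgebra k G) (x : C), d (a • x) = a • d x
  d_smul_op : ∀ (a : (MonoidAlgebra k G)ᵐᵒᵖ) (x : C), d (a • x) = a • d x
  aug : C →ₗ[k] MonoidAlgebra k G
  aug_gr : ∀ (n : ℕ) (x : C), x ∈ gr (n + 1) → aug x = 0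
  aug_smul : ∀ (a : MonoidAlgebra k G) (x : C), aug (a • x) = a * aug x
  aug_smul_op : ∀ (a : (MonoidAlgebra k G)ᵐᵒᵖ) (x : C), aug (a • x) = aug x * a.unop
  aug_surj : Function.Surjective aug
  exact_zero : ∀ x ∈ gr 0, aug x = 0 → ∃ y ∈ gr 1, d y = x
  exact_succ : ∀ (n : ℕ), ∀ x ∈ gr (n + 1), d x = 0 → ∃ y ∈ gr (n + 2), d y = x
  eps : C →ₗ[k] C
  eps_apply : ∀ (n : ℕ) (x : C), x ∈ gr n → eps x = ((-1 : k) ^ n) • x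

variable (D : Type u) [AddCommGroup D] [Module k D]
  [Module S D] [Module Sᵐᵒᵖ D]
  [IsScalarTower k S D] [IsScalarTower k Sᵐᵒᵖ D]
  [SMulCommClass S Sᵐᵒᵖ D] [SMulCommClass S k D] [SMulCommClass Sᵐᵒᵖ k D]
  [DistribMulAction G D] [SMulCommClass G k D]

/-- A projective resolution `D` of `S` by `S`-bimodules (internally graded), equipped with
a compatible left action of `G`: `g • (s • x) = (g • s) • (g • x)` and the differentials
are `kG`-linear. -/
structure ResS : Type u where
  gr : ℕ → Submodule k D
  internal : DirectSum.IsInternal gr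
  gr_smul : ∀ (n : ℕ) (s : S) (x : D), x ∈ gr n → s • x ∈ gr n
  gr_smul_op : ∀ (n : ℕ) (s : Sᵐᵒᵖ) (x : D), x ∈ gr n → s • x ∈ gr n
  gr_gact : ∀ (n : ℕ) (g : G) (x : D), x ∈ gr n → g • x ∈ gr n
  proj : letI : Module (S ⊗[k] Sᵐᵒᵖ) D := TensorProduct.Algebra.module
    Module.Projective (S ⊗[k] Sᵐᵒᵖ) D
  act_compat : ∀ (g : G) (s : S) (x : D), g • (s • x) = (g • s) • (g • x)
  act_compat_op : ∀ (g : G) (s : S) (x : D), g • (op s • x) = op (g • s) • (g • x)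
  d : D →ₗ[k] D
  d_gr : ∀ (n : ℕ) (x : D), x ∈ gr (n + 1) → d x ∈ gr n
  d_zero : ∀ x ∈ gr 0, d x = 0
  d_sq : d ∘ₗ d = 0
  d_smul : ∀ (s : S) (x : D), d (s • x) = s • d x
  d_smul_op : ∀ (s : Sᵐᵒᵖ) (x : D), d (s • x) = s • d x
  d_gact : ∀ (g : G) (x : D), d (g • x) = g • d x
  aug : D →ₗ[k] S
  aug_gr : ∀ (n : ℕ) (x : D), x ∈ gr (n + 1) → aug x = 0
  aug_smul : ∀ (s : S) (x : D), aug (s • x) = s * aug x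
  aug_smul_op : ∀ (s : Sᵐᵒᵖ) (x : D), aug (s • x) = aug x * s.unop
  aug_surj : Function.Surjective aug
  exact_zero : ∀ x ∈ gr 0, aug x = 0 → ∃ y ∈ gr 1, d y = x
  exact_succ : ∀ (n : ℕ), ∀ x ∈ gr (n + 1), d x = 0 → ∃ y ∈ gr (n + 2), d y = x

variable (A : Type u) [Ring A] [Algebra k A]

/-- The `k`-linear map `S ⊗ kG → A` sending `s ⊗ g ↦ ιS(s) ιG(g)`; requiring it to be
bijective expresses that `A = S ⋊ G` is the skew group algebra of the action of `G`
on `S` (via the embeddings `ιS`, `ιG` and the commutation rule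
`ιG(g) ιS(s) = ιS(g • s) ιG(g)`). -/
def skewAssembly (ιS : S →ₐ[k] A) (ιG : G →* A) : (G →₀ S) →ₗ[k] A :=
  Finsupp.lsum k fun g => (LinearMap.mulRight k (ιG g)) ∘ₗ ιS.toLinearMap

/-- The homogeneous component of total homological degree `n` of `X = C ⊗ D`. -/
def Xdeg (grC : ℕ → Submodule k C) (grD : ℕ → Submodule k D) (n : ℕ) :
    Submodule k (C ⊗[k] D) :=
  ⨆ (p : ℕ × ℕ) (_ : p.1 + p.2 = n),
    Submodule.span k
      (Set.image2 (fun (c : C) (d : D) => c ⊗ₜ[k] d) (grC p.1 : Set C) (grD p.2 : Set D))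

end SkewSetup

variable {G S}

/-- The composition of `1 ⊗ τ ⊗ 1 : C ⊗ C ⊗ D ⊗ D → C ⊗ D ⊗ C ⊗ D`
(where `τ(c ⊗ d) = (−1)^{ij} (ᵍd) ⊗ c` for `c ∈ (C_i)_g`, `d ∈ D_j`) with the canonical
surjection `C ⊗ D ⊗ C ⊗ D → (C ⊗^G D) ⊗_{S⋊G} (C ⊗^G D)` is `kG`-middle linear in the
first two tensor arguments and `S`-middle linear in the last two; that is, it factors
through `(C ⊗_{kG} C) ⊗ (D ⊗_S D)`. -/
theorem twisting_map_middle_linear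
    (C : Type u) [AddCommGroup C] [Module k C]
    [Module (MonoidAlgebra k G) C] [Module (MonoidAlgebra k G)ᵐᵒᵖ C]
    [IsScalarTower k (MonoidAlgebra k G) C] [IsScalarTower k (MonoidAlgebra k G)ᵐᵒᵖ C]
    [SMulCommClass (MonoidAlgebra k G) (MonoidAlgebra k G)ᵐᵒᵖ C]
    [SMulCommClass (MonoidAlgebra k G) k C] [SMulCommClass (MonoidAlgebra k G)ᵐᵒᵖ k C]
    (D : Type u) [AddCommGroup D] [Module k D]
    [Module S D] [Module Sᵐᵒᵖ D]
    [IsScalarTower k S D] [IsScalarTower k Sᵐᵒᵖ D]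
    [SMulCommClass S Sᵐᵒᵖ D] [SMulCommClass S k D] [SMulCommClass Sᵐᵒᵖ k D]
    [DistribMulAction G D] [SMulCommClass G k D]
    (RC : ResKG k G C) (RD : ResS k G S D)
    -- the skew group algebra `A = S ⋊ G`
    (A : Type u) [Ring A] [Algebra k A] (ιS : S →ₐ[k] A) (ιG : G →* A)
    (hcomm : ∀ (g : G) (s : S), ιG g * ιS s = ιS (g • s) * ιG g)
    (hskew : Function.Bijective (skewAssembly k G S A ιS ιG))
    -- the `A`-bimodule structure on `X = C ⊗ D`
    [Module A (C ⊗[k] D)] [Module Aᵐᵒᵖ (C ⊗[k] D)]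
    [IsScalarTower k A (C ⊗[k] D)] [IsScalarTower k Aᵐᵒᵖ (C ⊗[k] D)]
    [SMulCommClass A Aᵐᵒᵖ (C ⊗[k] D)]
    (hactL : ∀ (s' : S) (g' h : G) (c : C) (d : D), c ∈ RC.grG h →
      (ιS s' * ιG g') • (c ⊗ₜ[k] d) =
        ((MonoidAlgebra.single g' (1 : k)) • c) ⊗ₜ[k] ((((g' * h)⁻¹ : G) • s') • d))
    (hactR : ∀ (s : S) (g : G) (c : C) (d : D),
      (op (ιS s * ιG g)) • (c ⊗ₜ[k] d) =
        (op (MonoidAlgebra.single g (1 : k)) • c) ⊗ₜ[k] ((g⁻¹ : G) • (op s • d)))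
    -- the composition of `1 ⊗ τ ⊗ 1` with the canonical surjection
    -- `C ⊗ D ⊗ C ⊗ D → (C ⊗^G D) ⊗_{S ⋊ G} (C ⊗^G D)`, characterized by its values on
    -- pure tensors of homogeneous elements:
    (Ψ : (C ⊗[k] C) ⊗[k] (D ⊗[k] D) →ₗ[k] OverR k A (C ⊗[k] D) (C ⊗[k] D))
    (hΨ : ∀ (i j : ℕ) (g : G) (c c' : C) (d d' : D),
      c' ∈ RC.gr i → c' ∈ RC.grG g → d ∈ RD.gr j →
      Ψ ((c ⊗ₜ[k] c') ⊗ₜ[k] (d ⊗ₜ[k] d')) =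
        (-1 : k) ^ (i * j) • omk k A (c ⊗ₜ[k] (g • d)) (c' ⊗ₜ[k] d')) :
    -- `kG`-middle linearity in the first two arguments:
    (∀ (z : MonoidAlgebra k G) (c c' : C) (d d' : D),
      Ψ (((op z • c) ⊗ₜ[k] c') ⊗ₜ[k] (d ⊗ₜ[k] d')) =
        Ψ ((c ⊗ₜ[k] (z • c')) ⊗ₜ[k] (d ⊗ₜ[k] d'))) ∧
    -- `S`-middle linearity in the last two arguments:
    (∀ (s : S) (c c' : C) (d d' : D),
      Ψ ((c ⊗ₜ[k] c') ⊗ₜ[k] ((op s • d) ⊗ₜ[k] d')) =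
        Ψ ((c ⊗ₜ[k] c') ⊗ₜ[k] (d ⊗ₜ[k] (s • d')))) ∧
    -- hence the map factors through `(C ⊗_{kG} C) ⊗ (D ⊗_S D)`:
    (∃ Θ : (OverR k (MonoidAlgebra k G) C C) ⊗[k] (OverR k S D D) →ₗ[k]
        OverR k A (C ⊗[k] D) (C ⊗[k] D),
      Ψ = Θ ∘ₗ TensorProduct.map (midRel k (MonoidAlgebra k G) C C).mkQ
        (midRel k S D D).mkQ) := by
  classical
  -- the middle-linearity relation in the quotient `OverR k A X X`
  have mid : ∀ (a : A) (x y : C ⊗[k] D),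
      omk k A (op a • x) y = omk k A x (a • y) := by
    intro a x y
    refine (Submodule.Quotient.eq _).2 ?_
    exact Submodule.subset_span ⟨a, x, y, rfl⟩
  have hone : MonoidAlgebra.single (1 : G) (1 : k) = 1 := MonoidAlgebra.one_def.symm
  -- core computation for `kG`-middle linearity, on homogeneous elements
  have core1 : ∀ (g : G) (i j : ℕ) (h : G) (c c' : C) (d d' : D),
      c' ∈ RC.gr i → c' ∈ RC.grG h → d ∈ RD.gr j →
      Ψ (((op (MonoidAlgebra.single g (1 : k)) • c) ⊗ₜ[k] c') ⊗ₜ[k] (d ⊗ₜ[k] d')) =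
        Ψ ((c ⊗ₜ[k] (MonoidAlgebra.single g (1 : k) • c')) ⊗ₜ[k] (d ⊗ₜ[k] d')) := by
    intro g i j h c c' d d' hc'i hc'h hdj
    have hc'2 : MonoidAlgebra.single g (1 : k) • c' ∈ RC.grG (g * h) := by
      have := RC.grG_act g h 1 c' hc'h
      rwa [hone, op_one, one_smul, mul_one] at this
    have hc'i2 : MonoidAlgebra.single g (1 : k) • c' ∈ RC.gr i :=
      RC.gr_smul i _ c' hc'i
    rw [hΨ i j h _ c' d d' hc'i hc'h hdj,
      hΨ i j (g * h) c _ d d' hc'i2 hc'2 hdj]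
    congr 1
    have e1 : op (ιG g) • (c ⊗ₜ[k] ((g * h) • d)) =
        (op (MonoidAlgebra.single g (1 : k)) • c) ⊗ₜ[k] (h • d) := by
      have := hactR 1 g c ((g * h) • d)
      simp only [map_one, one_mul, op_one, one_smul] at this
      rw [smul_smul, inv_mul_cancel_left] at this
      exact this
    have e2 : ιG g • (c' ⊗ₜ[k] d') =
        (MonoidAlgebra.single g (1 : k) • c') ⊗ₜ[k] d' := by
      have := hactL 1 g h c' d' hc'h
      simp only [map_one, one_mul, smul_one, one_smul] at this
      exact this
    rw [← e1, ← e2]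
    exact mid (ιG g) _ _
  -- core computation for `S`-middle linearity, on homogeneous elements
  have core2 : ∀ (s : S) (i j : ℕ) (h : G) (c c' : C) (d d' : D),
      c' ∈ RC.gr i → c' ∈ RC.grG h → d ∈ RD.gr j →
      Ψ ((c ⊗ₜ[k] c') ⊗ₜ[k] ((op s • d) ⊗ₜ[k] d')) =
        Ψ ((c ⊗ₜ[k] c') ⊗ₜ[k] (d ⊗ₜ[k] (s • d'))) := by
    intro s i j h c c' d d' hc'i hc'h hdj
    have hd2 : op s • d ∈ RD.gr j := RD.gr_smul_op j _ d hdj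
    rw [hΨ i j h c c' _ d' hc'i hc'h hd2,
      hΨ i j h c c' d (s • d') hc'i hc'h hdj]
    congr 1
    have e1 : op (ιS (h • s)) • (c ⊗ₜ[k] (h • d)) =
        c ⊗ₜ[k] (h • (op s • d)) := by
      have := hactR (h • s) 1 c (h • d)
      simp only [map_one, mul_one, inv_one, one_smul, hone, op_one] at this
      rw [this, RD.act_compat_op]
    have e2 : ιS (h • s) • (c' ⊗ₜ[k] d') = c' ⊗ₜ[k] (s • d') := by
      have := hactL (h • s) 1 h c' d' hc'h
      simp only [map_one, mul_one, hone, one_smul, one_mul, inv_smul_smul] at this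
      exact this
    rw [← e1, ← e2]
    exact mid (ιS (h • s)) _ _
  -- top membership for the gradings
  have hCtop : ∀ c' : C, c' ∈ ⨆ p : ℕ × G, (RC.gr p.1 ⊓ RC.grG p.2) := by
    intro c'
    rw [RC.internal.submodule_iSup_eq_top]
    trivial
  have hDtop : ∀ d : D, d ∈ ⨆ n : ℕ, RD.gr n := by
    intro d
    rw [RD.internal.submodule_iSup_eq_top]
    trivial
  -- `kG`-middle linearity for `single g 1`
  have part1s : ∀ (g : G) (c c' : C) (d d' : D),
      Ψ (((op (MonoidAlgebra.single g (1 : k)) • c) ⊗ₜ[k] c') ⊗ₜ[k] (d ⊗ₜ[k] d')) =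
        Ψ ((c ⊗ₜ[k] (MonoidAlgebra.single g (1 : k) • c')) ⊗ₜ[k] (d ⊗ₜ[k] d')) := by
    intro g c c' d d'
    refine Submodule.iSup_induction (motive := fun c'' => ∀ d : D,
        Ψ (((op (MonoidAlgebra.single g (1 : k)) • c) ⊗ₜ[k] c'') ⊗ₜ[k] (d ⊗ₜ[k] d')) =
          Ψ ((c ⊗ₜ[k] (MonoidAlgebra.single g (1 : k) • c'')) ⊗ₜ[k] (d ⊗ₜ[k] d')))
      _ (hCtop c') ?_ ?_ ?_ d
    · rintro ⟨i, h⟩ c'' hc'' d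
      refine Submodule.iSup_induction (motive := fun d : D =>
          Ψ (((op (MonoidAlgebra.single g (1 : k)) • c) ⊗ₜ[k] c'') ⊗ₜ[k] (d ⊗ₜ[k] d')) =
            Ψ ((c ⊗ₜ[k] (MonoidAlgebra.single g (1 : k) • c'')) ⊗ₜ[k] (d ⊗ₜ[k] d')))
        _ (hDtop d) ?_ ?_ ?_
      · intro j d hd
        exact core1 g i j h c c'' d d' hc''.1 hc''.2 hd
      · simp
      · intro x y hx hy
        simp only [TensorProduct.tmul_add, TensorProduct.add_tmul, map_add, hx, hy]
    · intro d
      simp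
    · intro x y hx hy d
      simp only [smul_add, TensorProduct.tmul_add, TensorProduct.add_tmul, map_add,
        hx d, hy d]
  -- `kG`-middle linearity, in general
  have part1 : ∀ (z : MonoidAlgebra k G) (c c' : C) (d d' : D),
      Ψ (((op z • c) ⊗ₜ[k] c') ⊗ₜ[k] (d ⊗ₜ[k] d')) =
        Ψ ((c ⊗ₜ[k] (z • c')) ⊗ₜ[k] (d ⊗ₜ[k] d')) := by
    intro z c c' d d'
    induction z using MonoidAlgebra.induction_linear with
    | zero =>
      simp only [op_zero, zero_smul, TensorProduct.zero_tmul, TensorProduct.tmul_zero,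
        map_zero]
    | add f g hf hg =>
      simp only [op_add, add_smul, TensorProduct.add_tmul, TensorProduct.tmul_add,
        map_add, hf, hg]
    | single g b =>
      have hb : (MonoidAlgebra.single g b : MonoidAlgebra k G) =
          b • MonoidAlgebra.single g (1 : k) := by
        rw [MonoidAlgebra.smul_single', mul_one]
      simp only [hb, op_smul, smul_assoc, ← TensorProduct.smul_tmul',
        TensorProduct.tmul_smul, LinearMap.map_smul]
      rw [TensorProduct.smul_tmul']
      congr 1
      exact part1s g c c' d d'
  -- `S`-middle linearity
  have part2 : ∀ (s : S) (c c' : C) (d d' : D),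
      Ψ ((c ⊗ₜ[k] c') ⊗ₜ[k] ((op s • d) ⊗ₜ[k] d')) =
        Ψ ((c ⊗ₜ[k] c') ⊗ₜ[k] (d ⊗ₜ[k] (s • d'))) := by
    intro s c c' d d'
    refine Submodule.iSup_induction (motive := fun c'' => ∀ d : D,
        Ψ ((c ⊗ₜ[k] c'') ⊗ₜ[k] ((op s • d) ⊗ₜ[k] d')) =
          Ψ ((c ⊗ₜ[k] c'') ⊗ₜ[k] (d ⊗ₜ[k] (s • d'))))
      _ (hCtop c') ?_ ?_ ?_ d
    · rintro ⟨i, h⟩ c'' hc'' d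
      refine Submodule.iSup_induction (motive := fun d : D =>
          Ψ ((c ⊗ₜ[k] c'') ⊗ₜ[k] ((op s • d) ⊗ₜ[k] d')) =
            Ψ ((c ⊗ₜ[k] c'') ⊗ₜ[k] (d ⊗ₜ[k] (s • d'))))
        _ (hDtop d) ?_ ?_ ?_
      · intro j d hd
        exact core2 s i j h c c'' d d' hc''.1 hc''.2 hd
      · simp
      · intro x y hx hy
        simp only [smul_add, TensorProduct.tmul_add, TensorProduct.add_tmul, map_add,
          hx, hy]
    · intro d
      simp
    · intro x y hx hy d
      simp only [TensorProduct.tmul_add, TensorProduct.add_tmul, map_add, hx d, hy d]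
  refine ⟨part1, part2, ?_⟩
  -- Extend middle linearity to general tensors
  have part1' : ∀ (z : MonoidAlgebra k G) (c c' : C) (y : D ⊗[k] D),
      Ψ (((op z • c) ⊗ₜ[k] c') ⊗ₜ[k] y) = Ψ ((c ⊗ₜ[k] (z • c')) ⊗ₜ[k] y) := by
    intro z c c' y
    induction y using TensorProduct.induction_on with
    | zero => simp
    | tmul d d' => exact part1 z c c' d d'
    | add a b ha hb => simp only [TensorProduct.tmul_add, map_add, ha, hb]
  have part2' : ∀ (x : C ⊗[k] C) (s : S) (d d' : D),
      Ψ (x ⊗ₜ[k] ((op s • d) ⊗ₜ[k] d')) = Ψ (x ⊗ₜ[k] (d ⊗ₜ[k] (s • d'))) := by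
    intro x s d d'
    induction x using TensorProduct.induction_on with
    | zero => simp
    | tmul c c' => exact part2 s c c' d d'
    | add a b ha hb => simp only [TensorProduct.add_tmul, map_add, ha, hb]
  -- build the factorization
  have hker2 : ∀ x : C ⊗[k] C,
      midRel k S D D ≤ LinearMap.ker (TensorProduct.curry Ψ x) := by
    intro x
    rw [midRel, Submodule.span_le]
    rintro _ ⟨s, d, d', rfl⟩
    simp only [SetLike.mem_coe, LinearMap.mem_ker, map_sub,
      TensorProduct.curry_apply, part2' x s d d', sub_self]
  set θ : (C ⊗[k] C) →ₗ[k] (OverR k S D D →ₗ[k] OverR k A (C ⊗[k] D) (C ⊗[k] D)) :=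
    { toFun := fun x => (midRel k S D D).liftQ (TensorProduct.curry Ψ x) (hker2 x)
      map_add' := by
        intro a b
        apply LinearMap.ext
        intro q
        obtain ⟨y, rfl⟩ := (midRel k S D D).mkQ_surjective q
        simp [Submodule.liftQ_apply]
      map_smul' := by
        intro r a
        apply LinearMap.ext
        intro q
        obtain ⟨y, rfl⟩ := (midRel k S D D).mkQ_surjective q
        simp [Submodule.liftQ_apply] } with hθ
  have hθ_apply : ∀ (x : C ⊗[k] C) (y : D ⊗[k] D),
      θ x (Submodule.Quotient.mk y) = Ψ (x ⊗ₜ[k] y) := by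
    intro x y
    simp [hθ, Submodule.liftQ_apply]
  have hker1 : midRel k (MonoidAlgebra k G) C C ≤ LinearMap.ker θ := by
    rw [midRel, Submodule.span_le]
    rintro _ ⟨z, c, c', rfl⟩
    rw [SetLike.mem_coe, LinearMap.mem_ker]
    apply LinearMap.ext
    intro q
    obtain ⟨y, rfl⟩ := (midRel k S D D).mkQ_surjective q
    have := hθ_apply ((op z • c) ⊗ₜ[k] c' - c ⊗ₜ[k] (z • c')) y
    rw [Submodule.mkQ_apply, this]
    rw [TensorProduct.sub_tmul, map_sub, part1' z c c' y, sub_self]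
    simp
  refine ⟨TensorProduct.lift ((midRel k (MonoidAlgebra k G) C C).liftQ θ hker1), ?_⟩
  apply TensorProduct.ext'
  intro x y
  simp only [LinearMap.comp_apply, TensorProduct.map_tmul, Submodule.mkQ_apply,
    TensorProduct.lift.tmul, Submodule.liftQ_apply]
  exact (hθ_apply x y).symm

end
end

section
/- Suppose (C, Δ_C, μ_C) is a differential graded coalgebra resolution of kG with Δ_C and μ_C preserving the G-grading, and (D, Δ_D, μ_D) is a differential graded coalgebra resolution of S with Δ_D and μ_D being kG-module homomorphisms. Then the map Δ_X = (1 ⊗ τ ⊗ 1)(Δ_C ⊗ Δ_D) on X = C ⊗^G D is counital: (μ_X ⊗ 1_X)Δ_X = 1_X = (1_X ⊗ μ_X)Δ_X, where μ_X = μ_C ⊗ μ_D is the augmentation of X. -/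
open scoped TensorProduct
open MulOpposite

noncomputable section

universe u

variable (k : Type u) [Field k]

variable (G : Type u) [Group G] [Finite G] [DecidableEq G]
variable (S : Type u) [Ring S] [Algebra k S] [MulSemiringAction G S] [SMulCommClass G k S]

section Extra

variable (R : Type u) [Ring R]

/-- The middle-linearity relations for the triple tensor product `M ⊗_R M ⊗_R M`. -/
def midRel3 (M : Type u)
    [AddCommGroup M] [Module k M] [Module R M] [Module Rᵐᵒᵖ M] :
    Submodule k (M ⊗[k] (M ⊗[k] M)) :=
  Submodule.span k
    ({z | ∃ (r : R) (m n q : M),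
        z = (op r • m) ⊗ₜ[k] (n ⊗ₜ[k] q) - m ⊗ₜ[k] ((r • n) ⊗ₜ[k] q)} ∪
     {z | ∃ (r : R) (m n q : M),
        z = m ⊗ₜ[k] ((op r • n) ⊗ₜ[k] q) - m ⊗ₜ[k] (n ⊗ₜ[k] (r • q))})

/-- The triple tensor product `M ⊗_R M ⊗_R M` over `R`. -/
abbrev Over3 (M : Type u)
    [AddCommGroup M] [Module k M] [Module R M] [Module Rᵐᵒᵖ M] : Type u :=
  (M ⊗[k] (M ⊗[k] M)) ⧸ midRel3 k R M

/-- The image of a pure tensor in `M ⊗_R M ⊗_R M`. -/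
abbrev omk3 {M : Type u}
    [AddCommGroup M] [Module k M] [Module R M] [Module Rᵐᵒᵖ M] (m n q : M) :
    Over3 k R M :=
  Submodule.Quotient.mk (m ⊗ₜ[k] (n ⊗ₜ[k] q))

/-- The homogeneous component of total homological degree `n` of `M ⊗_R M` for an
internally graded `M`. -/
def TdegN (M : Type u)
    [AddCommGroup M] [Module k M] [Module R M] [Module Rᵐᵒᵖ M]
    (gr : ℕ → Submodule k M) (n : ℕ) : Submodule k (OverR k R M M) :=
  ⨆ (p : ℕ × ℕ) (_ : p.1 + p.2 = n),
    Submodule.span k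
      (Set.image2 (fun x y : M => omk k R x y) (gr p.1 : Set M) (gr p.2 : Set M))

/-- The homogeneous component of `G`-degree `g` of `M ⊗_R M` for a `G`-graded `M`. -/
def TdegG (M : Type u)
    [AddCommGroup M] [Module k M] [Module R M] [Module Rᵐᵒᵖ M]
    (grG : G → Submodule k M) (g : G) : Submodule k (OverR k R M M) :=
  ⨆ (p : G × G) (_ : p.1 * p.2 = g),
    Submodule.span k
      (Set.image2 (fun x y : M => omk k R x y) (grG p.1 : Set M) (grG p.2 : Set M))

end Extra

variable {G S}

set_option maxHeartbeats 1600000 in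
/-- With `(C, Δ_C, μ_C)` and `(D, Δ_D, μ_D)` differential graded
coalgebra resolutions of `kG` and `S` as above, the map
`Δ_X = (1 ⊗ τ ⊗ 1)(Δ_C ⊗ Δ_D)` on `X = C ⊗^G D` is counital:
`(μ_X ⊗ 1_X) Δ_X = 1_X = (1_X ⊗ μ_X) Δ_X`, where `μ_X = μ_C ⊗ μ_D` is the augmentation
of `X`. -/
theorem twisted_product_diagonal_counital
    (C : Type u) [AddCommGroup C] [Module k C]
    [Module (MonoidAlgebra k G) C] [Module (MonoidAlgebra k G)ᵐᵒᵖ C]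
    [IsScalarTower k (MonoidAlgebra k G) C] [IsScalarTower k (MonoidAlgebra k G)ᵐᵒᵖ C]
    [SMulCommClass (MonoidAlgebra k G) (MonoidAlgebra k G)ᵐᵒᵖ C]
    [SMulCommClass (MonoidAlgebra k G) k C] [SMulCommClass (MonoidAlgebra k G)ᵐᵒᵖ k C]
    (D : Type u) [AddCommGroup D] [Module k D]
    [Module S D] [Module Sᵐᵒᵖ D]
    [IsScalarTower k S D] [IsScalarTower k Sᵐᵒᵖ D]
    [SMulCommClass S Sᵐᵒᵖ D] [SMulCommClass S k D] [SMulCommClass Sᵐᵒᵖ k D]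
    [DistribMulAction G D] [SMulCommClass G k D]
    (RC : ResKG k G C) (RD : ResS k G S D)
    -- the skew group algebra `A = S ⋊ G`
    (A : Type u) [Ring A] [Algebra k A] (ιS : S →ₐ[k] A) (ιG : G →* A)
    (hcomm : ∀ (g : G) (s : S), ιG g * ιS s = ιS (g • s) * ιG g)
    (hskew : Function.Bijective (skewAssembly k G S A ιS ιG))
    -- the `A`-bimodule structure on `X = C ⊗ D`
    [Module A (C ⊗[k] D)] [Module Aᵐᵒᵖ (C ⊗[k] D)]
    [IsScalarTower k A (C ⊗[k] D)] [IsScalarTower k Aᵐᵒᵖ (C ⊗[k] D)]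
    [SMulCommClass A Aᵐᵒᵖ (C ⊗[k] D)]
    (hactL : ∀ (s' : S) (g' h : G) (c : C) (d : D), c ∈ RC.grG h →
      (ιS s' * ιG g') • (c ⊗ₜ[k] d) =
        ((MonoidAlgebra.single g' (1 : k)) • c) ⊗ₜ[k] ((((g' * h)⁻¹ : G) • s') • d))
    (hactR : ∀ (s : S) (g : G) (c : C) (d : D),
      (op (ιS s * ιG g)) • (c ⊗ₜ[k] d) =
        (op (MonoidAlgebra.single g (1 : k)) • c) ⊗ₜ[k] ((g⁻¹ : G) • (op s • d)))
    -- the differentials on `C ⊗_{kG} C` and `D ⊗_S D`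
    (dTCC : OverR k (MonoidAlgebra k G) C C →ₗ[k] OverR k (MonoidAlgebra k G) C C)
    (hdTCC : ∀ (i : ℕ) (c c' : C), c ∈ RC.gr i →
      dTCC (omk k (MonoidAlgebra k G) c c') =
        omk k (MonoidAlgebra k G) (RC.d c) c' +
          (-1 : k) ^ i • omk k (MonoidAlgebra k G) c (RC.d c'))
    (dTDD : OverR k S D D →ₗ[k] OverR k S D D)
    (hdTDD : ∀ (j : ℕ) (d d' : D), d ∈ RD.gr j →
      dTDD (omk k S d d') =
        omk k S (RD.d d) d' + (-1 : k) ^ j • omk k S d (RD.d d'))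
    -- the differential graded coalgebra structure on `C`: counit maps, diagonal,
    -- bimodule actions on `C ⊗_{kG} C`, and coassociativity data
    (lmuC : OverR k (MonoidAlgebra k G) C C →ₗ[k] C)
    (hlmuC : ∀ c c' : C, lmuC (omk k (MonoidAlgebra k G) c c') = RC.aug c • c')
    (rmuC : OverR k (MonoidAlgebra k G) C C →ₗ[k] C)
    (hrmuC : ∀ c c' : C, rmuC (omk k (MonoidAlgebra k G) c c') = op (RC.aug c') • c)
    (mulTC : OverR k (MonoidAlgebra k G) C C →ₗ[k] MonoidAlgebra k G)
    (hmulTC : ∀ c c' : C, mulTC (omk k (MonoidAlgebra k G) c c') = RC.aug c * RC.aug c')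
    (actLC : MonoidAlgebra k G →
      OverR k (MonoidAlgebra k G) C C →ₗ[k] OverR k (MonoidAlgebra k G) C C)
    (hactLC : ∀ (z : MonoidAlgebra k G) (c c' : C),
      actLC z (omk k (MonoidAlgebra k G) c c') = omk k (MonoidAlgebra k G) (z • c) c')
    (actRC : (MonoidAlgebra k G)ᵐᵒᵖ →
      OverR k (MonoidAlgebra k G) C C →ₗ[k] OverR k (MonoidAlgebra k G) C C)
    (hactRC : ∀ (z : (MonoidAlgebra k G)ᵐᵒᵖ) (c c' : C),
      actRC z (omk k (MonoidAlgebra k G) c c') = omk k (MonoidAlgebra k G) c (z • c'))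
    (ΔC : C →ₗ[k] OverR k (MonoidAlgebra k G) C C)
    (hΔC_gr : ∀ (n : ℕ) (x : C), x ∈ RC.gr n →
      ΔC x ∈ TdegN k (MonoidAlgebra k G) C RC.gr n)
    (hΔC_grG : ∀ (g : G) (x : C), x ∈ RC.grG g →
      ΔC x ∈ TdegG k G (MonoidAlgebra k G) C RC.grG g)
    (hΔC_smul : ∀ (z : MonoidAlgebra k G) (x : C), ΔC (z • x) = actLC z (ΔC x))
    (hΔC_smul_op : ∀ (z : (MonoidAlgebra k G)ᵐᵒᵖ) (x : C), ΔC (z • x) = actRC z (ΔC x))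
    (hΔC_chain : ΔC ∘ₗ RC.d = dTCC ∘ₗ ΔC)
    (hΔC_counit_l : lmuC ∘ₗ ΔC = LinearMap.id)
    (hΔC_counit_r : rmuC ∘ₗ ΔC = LinearMap.id)
    (hΔC_lift : mulTC ∘ₗ ΔC = RC.aug)
    (ot1C : OverR k (MonoidAlgebra k G) C C →ₗ[k] C →ₗ[k] Over3 k (MonoidAlgebra k G) C)
    (hot1C : ∀ x y z : C,
      ot1C (omk k (MonoidAlgebra k G) x y) z = omk3 k (MonoidAlgebra k G) x y z)
    (ot2C : C →ₗ[k] OverR k (MonoidAlgebra k G) C C →ₗ[k] Over3 k (MonoidAlgebra k G) C)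
    (hot2C : ∀ x y z : C,
      ot2C x (omk k (MonoidAlgebra k G) y z) = omk3 k (MonoidAlgebra k G) x y z)
    (ΔLC : OverR k (MonoidAlgebra k G) C C →ₗ[k] Over3 k (MonoidAlgebra k G) C)
    (hΔLC : ∀ x y : C, ΔLC (omk k (MonoidAlgebra k G) x y) = ot1C (ΔC x) y)
    (ΔRC : OverR k (MonoidAlgebra k G) C C →ₗ[k] Over3 k (MonoidAlgebra k G) C)
    (hΔRC : ∀ x y : C, ΔRC (omk k (MonoidAlgebra k G) x y) = ot2C x (ΔC y))
    (hΔC_coassoc : ΔLC ∘ₗ ΔC = ΔRC ∘ₗ ΔC)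
    -- `μ_C` preserves the `G`-grading
    (haugC_grG : ∀ (g : G) (x : C), x ∈ RC.grG g →
      ∃ κ : k, RC.aug x = MonoidAlgebra.single g κ)
    -- the differential graded coalgebra structure on `D`
    (lmuD : OverR k S D D →ₗ[k] D)
    (hlmuD : ∀ d d' : D, lmuD (omk k S d d') = RD.aug d • d')
    (rmuD : OverR k S D D →ₗ[k] D)
    (hrmuD : ∀ d d' : D, rmuD (omk k S d d') = op (RD.aug d') • d)
    (mulTD : OverR k S D D →ₗ[k] S)
    (hmulTD : ∀ d d' : D, mulTD (omk k S d d') = RD.aug d * RD.aug d')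
    (actLD : S → OverR k S D D →ₗ[k] OverR k S D D)
    (hactLD : ∀ (s : S) (d d' : D), actLD s (omk k S d d') = omk k S (s • d) d')
    (actRD : Sᵐᵒᵖ → OverR k S D D →ₗ[k] OverR k S D D)
    (hactRD : ∀ (s : Sᵐᵒᵖ) (d d' : D), actRD s (omk k S d d') = omk k S d (s • d'))
    -- the diagonal `G`-action on `D ⊗_S D`
    (gTDD : G → OverR k S D D →ₗ[k] OverR k S D D)
    (hgTDD : ∀ (g : G) (d d' : D), gTDD g (omk k S d d') = omk k S (g • d) (g • d'))
    (ΔD : D →ₗ[k] OverR k S D D)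
    (hΔD_gr : ∀ (n : ℕ) (x : D), x ∈ RD.gr n → ΔD x ∈ TdegN k S D RD.gr n)
    (hΔD_smul : ∀ (s : S) (x : D), ΔD (s • x) = actLD s (ΔD x))
    (hΔD_smul_op : ∀ (s : Sᵐᵒᵖ) (x : D), ΔD (s • x) = actRD s (ΔD x))
    -- `Δ_D` is a `kG`-module homomorphism
    (hΔD_gact : ∀ (g : G) (x : D), ΔD (g • x) = gTDD g (ΔD x))
    (hΔD_chain : ΔD ∘ₗ RD.d = dTDD ∘ₗ ΔD)
    (hΔD_counit_l : lmuD ∘ₗ ΔD = LinearMap.id)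
    (hΔD_counit_r : rmuD ∘ₗ ΔD = LinearMap.id)
    (hΔD_lift : mulTD ∘ₗ ΔD = RD.aug)
    (ot1D : OverR k S D D →ₗ[k] D →ₗ[k] Over3 k S D)
    (hot1D : ∀ x y z : D, ot1D (omk k S x y) z = omk3 k S x y z)
    (ot2D : D →ₗ[k] OverR k S D D →ₗ[k] Over3 k S D)
    (hot2D : ∀ x y z : D, ot2D x (omk k S y z) = omk3 k S x y z)
    (ΔLD : OverR k S D D →ₗ[k] Over3 k S D)
    (hΔLD : ∀ x y : D, ΔLD (omk k S x y) = ot1D (ΔD x) y)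
    (ΔRD : OverR k S D D →ₗ[k] Over3 k S D)
    (hΔRD : ∀ x y : D, ΔRD (omk k S x y) = ot2D x (ΔD y))
    (hΔD_coassoc : ΔLD ∘ₗ ΔD = ΔRD ∘ₗ ΔD)
    -- `μ_D` is a `kG`-module homomorphism
    (haugD_gact : ∀ (g : G) (x : D), RD.aug (g • x) = g • RD.aug x)
    -- the chain map `1 ⊗ τ ⊗ 1 : (C ⊗_{kG} C) ⊗ (D ⊗_S D) → X ⊗_A X` induced by the
    -- twisting map `τ(c ⊗ d) = (−1)^{ij} (ᵍd) ⊗ c` for `c ∈ (C_i)_g`, `d ∈ D_j`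
    (Θ : (OverR k (MonoidAlgebra k G) C C) ⊗[k] (OverR k S D D) →ₗ[k]
      OverR k A (C ⊗[k] D) (C ⊗[k] D))
    (hΘ : ∀ (i j : ℕ) (g : G) (c c' : C) (d d' : D),
      c' ∈ RC.gr i → c' ∈ RC.grG g → d ∈ RD.gr j →
      Θ ((omk k (MonoidAlgebra k G) c c') ⊗ₜ[k] (omk k S d d')) =
        (-1 : k) ^ (i * j) • omk k A (c ⊗ₜ[k] (g • d)) (c' ⊗ₜ[k] d'))
    -- the augmentation `μ_X = μ_C ⊗ μ_D : X → A` (under the canonical identification of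
    -- `X₀ = C₀ ⊗ D₀` with `A` coming from the bimodule structure) and the counit maps
    -- `μ_X ⊗ 1` and `1 ⊗ μ_X` on `X ⊗_A X`
    (augX : C ⊗[k] D →ₗ[k] A)
    (haugX : ∀ (g : G) (c : C) (d : D), c ∈ RC.grG g →
      augX (c ⊗ₜ[k] d) =
        ιS (g • RD.aug d) * (MonoidAlgebra.lift k A G ιG) (RC.aug c))
    (lmuX : OverR k A (C ⊗[k] D) (C ⊗[k] D) →ₗ[k] C ⊗[k] D)
    (hlmuX : ∀ x y : C ⊗[k] D, lmuX (omk k A x y) = augX x • y)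
    (rmuX : OverR k A (C ⊗[k] D) (C ⊗[k] D) →ₗ[k] C ⊗[k] D)
    (hrmuX : ∀ x y : C ⊗[k] D, rmuX (omk k A x y) = op (augX y) • x) :
    lmuX ∘ₗ (Θ ∘ₗ TensorProduct.map ΔC ΔD) = LinearMap.id ∧
    rmuX ∘ₗ (Θ ∘ₗ TensorProduct.map ΔC ΔD) = LinearMap.id := by

  classical
  -- homogeneous generating sets
  have hΔC_mem : ∀ (g : G) (c : C), c ∈ RC.grG g →
      ΔC c ∈ Submodule.span k {z : OverR k (MonoidAlgebra k G) C C |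
        ∃ (ga gb : G) (i : ℕ) (a b : C), a ∈ RC.grG ga ∧ b ∈ RC.gr i ∧ b ∈ RC.grG gb ∧
          z = omk k (MonoidAlgebra k G) a b} := by
    intro g c hc
    have h1 := hΔC_grG g c hc
    revert h1
    refine fun h1 => ?_
    have hle : TdegG k G (MonoidAlgebra k G) C RC.grG g ≤
        Submodule.span k {z : OverR k (MonoidAlgebra k G) C C |
          ∃ (ga gb : G) (i : ℕ) (a b : C), a ∈ RC.grG ga ∧ b ∈ RC.gr i ∧ b ∈ RC.grG gb ∧
            z = omk k (MonoidAlgebra k G) a b} := by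
      refine iSup_le fun p => iSup_le fun _ => Submodule.span_le.2 ?_
      rintro z ⟨a, ha, b, hb, rfl⟩
      have hbtop : b ∈ ⨆ q : ℕ × G, (RC.gr q.1 ⊓ RC.grG q.2) := by
        rw [RC.internal.submodule_iSup_eq_top]; exact Submodule.mem_top
      refine Submodule.iSup_induction (x := b)
        (motive := fun b => (omk k (MonoidAlgebra k G) a b) ∈ Submodule.span k
          {z : OverR k (MonoidAlgebra k G) C C |
            ∃ (ga gb : G) (i : ℕ) (a b : C), a ∈ RC.grG ga ∧ b ∈ RC.gr i ∧ b ∈ RC.grG gb ∧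
              z = omk k (MonoidAlgebra k G) a b}) _ hbtop ?_ ?_ ?_
      · intro q x hx
        exact Submodule.subset_span ⟨p.1, q.2, q.1, a, x, ha, hx.1, hx.2, rfl⟩
      · have : (omk k (MonoidAlgebra k G) a (0 : C)) = 0 := by
          show Submodule.Quotient.mk _ = _
          rw [TensorProduct.tmul_zero, Submodule.Quotient.mk_zero]
        rw [this]; exact Submodule.zero_mem _
      · intro x y hx hy
        have : (omk k (MonoidAlgebra k G) a (x + y)) =
            omk k (MonoidAlgebra k G) a x + omk k (MonoidAlgebra k G) a y := by
          show Submodule.Quotient.mk _ = _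
          rw [TensorProduct.tmul_add, Submodule.Quotient.mk_add]
        rw [this]; exact Submodule.add_mem _ hx hy
    exact hle h1
  have hΔD_mem : ∀ (m : ℕ) (d : D), d ∈ RD.gr m →
      ΔD d ∈ Submodule.span k {z : OverR k S D D |
        ∃ (j : ℕ) (e f : D), e ∈ RD.gr j ∧ z = omk k S e f} := by
    intro m d hd
    have h1 := hΔD_gr m d hd
    have hle : TdegN k S D RD.gr m ≤
        Submodule.span k {z : OverR k S D D |
          ∃ (j : ℕ) (e f : D), e ∈ RD.gr j ∧ z = omk k S e f} := by
      refine iSup_le fun p => iSup_le fun _ => Submodule.span_le.2 ?_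
      rintro z ⟨e, he, f, hf, rfl⟩
      exact Submodule.subset_span ⟨p.1, e, f, he, rfl⟩
    exact hle h1
  -- per-term computations
  have Lterm : ∀ (ga gb : G) (i j : ℕ) (a b : C) (e f : D),
      a ∈ RC.grG ga → b ∈ RC.gr i → b ∈ RC.grG gb → e ∈ RD.gr j →
      lmuX (Θ (omk k (MonoidAlgebra k G) a b ⊗ₜ[k] omk k S e f)) =
        (RC.aug a • b) ⊗ₜ[k] (RD.aug e • f) := by
    intro ga gb i j a b e f haG hbN hbG he
    rw [hΘ i j gb a b e f hbN hbG he, map_smul, hlmuX, haugX ga a (gb • e) haG,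
        haugD_gact]
    cases j with
    | succ n =>
      rw [RD.aug_gr n e he]
      simp only [smul_zero, map_zero, zero_mul, zero_smul, TensorProduct.tmul_zero]
    | zero =>
      obtain ⟨κ, hκ⟩ := haugC_grG ga a haG
      rw [mul_zero, pow_zero, one_smul, hκ, MonoidAlgebra.lift_single, mul_smul_comm,
        smul_assoc, hactL (ga • gb • RD.aug e) ga gb b f hbG, smul_smul ga gb,
        inv_smul_smul]
      rw [TensorProduct.smul_tmul', ← smul_assoc, MonoidAlgebra.smul_single', mul_one]
  have Rterm : ∀ (gb : G) (i j : ℕ) (a b : C) (e f : D),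
      b ∈ RC.gr i → b ∈ RC.grG gb → e ∈ RD.gr j →
      rmuX (Θ (omk k (MonoidAlgebra k G) a b ⊗ₜ[k] omk k S e f)) =
        (op (RC.aug b) • a) ⊗ₜ[k] (op (RD.aug f) • e) := by
    intro gb i j a b e f hbN hbG he
    rw [hΘ i j gb a b e f hbN hbG he, map_smul, hrmuX, haugX gb b f hbG]
    cases i with
    | succ n =>
      rw [RC.aug_gr n b hbN]
      simp only [map_zero, mul_zero, op_zero, zero_smul, smul_zero,
        TensorProduct.zero_tmul]
    | zero =>
      obtain ⟨κ, hκ⟩ := haugC_grG gb b hbG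
      rw [zero_mul, pow_zero, one_smul, hκ, MonoidAlgebra.lift_single, mul_smul_comm,
        op_smul, smul_assoc, hactR (gb • RD.aug f) gb a (gb • e),
        ← RD.act_compat_op gb (RD.aug f) e, inv_smul_smul]
      rw [TensorProduct.smul_tmul', ← smul_assoc, ← MulOpposite.op_smul,
        MonoidAlgebra.smul_single', mul_one]
  -- bilinear extension to spans
  have Lmain : ∀ t ∈ Submodule.span k {z : OverR k (MonoidAlgebra k G) C C |
        ∃ (ga gb : G) (i : ℕ) (a b : C), a ∈ RC.grG ga ∧ b ∈ RC.gr i ∧ b ∈ RC.grG gb ∧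
          z = omk k (MonoidAlgebra k G) a b},
      ∀ u ∈ Submodule.span k {z : OverR k S D D |
        ∃ (j : ℕ) (e f : D), e ∈ RD.gr j ∧ z = omk k S e f},
      lmuX (Θ (t ⊗ₜ[k] u)) = lmuC t ⊗ₜ[k] lmuD u := by
    intro t ht
    induction ht using Submodule.span_induction with
    | mem x hx =>
      obtain ⟨ga, gb, i, a, b, haG, hbN, hbG, rfl⟩ := hx
      intro u hu
      induction hu using Submodule.span_induction with
      | mem y hy =>
        obtain ⟨j, e, f, he, rfl⟩ := hy
        rw [Lterm ga gb i j a b e f haG hbN hbG he, hlmuC, hlmuD]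
      | zero => simp [TensorProduct.tmul_zero]
      | add y z _ _ hy hz =>
        rw [TensorProduct.tmul_add, map_add, map_add, map_add, hy, hz,
          TensorProduct.tmul_add]
      | smul r y _ hy =>
        rw [TensorProduct.tmul_smul, map_smul, map_smul, map_smul, hy,
          TensorProduct.tmul_smul]
    | zero => intro u hu; simp [TensorProduct.zero_tmul]
    | add x y _ _ hx hy =>
      intro u hu
      rw [TensorProduct.add_tmul, map_add, map_add, map_add, hx u hu, hy u hu,
        TensorProduct.add_tmul]
    | smul r x _ hx =>
      intro u hu
      rw [← TensorProduct.smul_tmul', map_smul, map_smul, map_smul, hx u hu,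
        TensorProduct.smul_tmul']
  have Rmain : ∀ t ∈ Submodule.span k {z : OverR k (MonoidAlgebra k G) C C |
        ∃ (ga gb : G) (i : ℕ) (a b : C), a ∈ RC.grG ga ∧ b ∈ RC.gr i ∧ b ∈ RC.grG gb ∧
          z = omk k (MonoidAlgebra k G) a b},
      ∀ u ∈ Submodule.span k {z : OverR k S D D |
        ∃ (j : ℕ) (e f : D), e ∈ RD.gr j ∧ z = omk k S e f},
      rmuX (Θ (t ⊗ₜ[k] u)) = rmuC t ⊗ₜ[k] rmuD u := by
    intro t ht
    induction ht using Submodule.span_induction with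
    | mem x hx =>
      obtain ⟨ga, gb, i, a, b, haG, hbN, hbG, rfl⟩ := hx
      intro u hu
      induction hu using Submodule.span_induction with
      | mem y hy =>
        obtain ⟨j, e, f, he, rfl⟩ := hy
        rw [Rterm gb i j a b e f hbN hbG he, hrmuC, hrmuD]
      | zero => simp [TensorProduct.tmul_zero]
      | add y z _ _ hy hz =>
        rw [TensorProduct.tmul_add, map_add, map_add, map_add, hy, hz,
          TensorProduct.tmul_add]
      | smul r y _ hy =>
        rw [TensorProduct.tmul_smul, map_smul, map_smul, map_smul, hy,
          TensorProduct.tmul_smul]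
    | zero => intro u hu; simp [TensorProduct.zero_tmul]
    | add x y _ _ hx hy =>
      intro u hu
      rw [TensorProduct.add_tmul, map_add, map_add, map_add, hx u hu, hy u hu,
        TensorProduct.add_tmul]
    | smul r x _ hx =>
      intro u hu
      rw [← TensorProduct.smul_tmul', map_smul, map_smul, map_smul, hx u hu,
        TensorProduct.smul_tmul']
  constructor
  · apply TensorProduct.ext'
    intro c d
    simp only [LinearMap.comp_apply, TensorProduct.map_tmul, LinearMap.id_apply]
    have hc : c ∈ ⨆ p : ℕ × G, (RC.gr p.1 ⊓ RC.grG p.2) := by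
      rw [RC.internal.submodule_iSup_eq_top]; exact Submodule.mem_top
    refine Submodule.iSup_induction (x := c)
      (motive := fun c => lmuX (Θ (ΔC c ⊗ₜ[k] ΔD d)) = c ⊗ₜ[k] d) _ hc ?_ ?_ ?_
    · intro p c hcp
      have hd : d ∈ ⨆ m : ℕ, RD.gr m := by
        rw [RD.internal.submodule_iSup_eq_top]; exact Submodule.mem_top
      refine Submodule.iSup_induction (x := d)
        (motive := fun d => lmuX (Θ (ΔC c ⊗ₜ[k] ΔD d)) = c ⊗ₜ[k] d) _ hd ?_ ?_ ?_
      · intro m d hdm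
        rw [Lmain _ (hΔC_mem p.2 c hcp.2) _ (hΔD_mem m d hdm)]
        have h1 := LinearMap.congr_fun hΔC_counit_l c
        have h2 := LinearMap.congr_fun hΔD_counit_l d
        simp only [LinearMap.comp_apply, LinearMap.id_apply] at h1 h2
        rw [h1, h2]
      · simp [TensorProduct.tmul_zero]
      · intro x y hx hy
        rw [map_add, TensorProduct.tmul_add, map_add, map_add, hx, hy,
          TensorProduct.tmul_add]
    · simp [TensorProduct.zero_tmul]
    · intro x y hx hy
      rw [map_add, TensorProduct.add_tmul, map_add, map_add, hx, hy,
        TensorProduct.add_tmul]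
  · apply TensorProduct.ext'
    intro c d
    simp only [LinearMap.comp_apply, TensorProduct.map_tmul, LinearMap.id_apply]
    have hc : c ∈ ⨆ p : ℕ × G, (RC.gr p.1 ⊓ RC.grG p.2) := by
      rw [RC.internal.submodule_iSup_eq_top]; exact Submodule.mem_top
    refine Submodule.iSup_induction (x := c)
      (motive := fun c => rmuX (Θ (ΔC c ⊗ₜ[k] ΔD d)) = c ⊗ₜ[k] d) _ hc ?_ ?_ ?_
    · intro p c hcp
      have hd : d ∈ ⨆ m : ℕ, RD.gr m := by
        rw [RD.internal.submodule_iSup_eq_top]; exact Submodule.mem_top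
      refine Submodule.iSup_induction (x := d)
        (motive := fun d => rmuX (Θ (ΔC c ⊗ₜ[k] ΔD d)) = c ⊗ₜ[k] d) _ hd ?_ ?_ ?_
      · intro m d hdm
        rw [Rmain _ (hΔC_mem p.2 c hcp.2) _ (hΔD_mem m d hdm)]
        have h1 := LinearMap.congr_fun hΔC_counit_r c
        have h2 := LinearMap.congr_fun hΔD_counit_r d
        simp only [LinearMap.comp_apply, LinearMap.id_apply] at h1 h2
        rw [h1, h2]
      · simp [TensorProduct.tmul_zero]
      · intro x y hx hy
        rw [map_add, TensorProduct.tmul_add, map_add, map_add, hx, hy,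
          TensorProduct.tmul_add]
    · simp [TensorProduct.zero_tmul]
    · intro x y hx hy
      rw [map_add, TensorProduct.add_tmul, map_add, map_add, hx, hy,
        TensorProduct.add_tmul]


end
end
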